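/- Let μ be a Borel probability measure on ℝ whose support is contained in a bounded open interval (a,b), let φ : ℝ → ℝ be a bounded, nondecreasing, continuously differentiable function, and let ε > 0. Then ∫_ℝ [φ(λ+ε) − φ(λ)] dμ(λ) ≤ s(μ,ε) · [φ(b+ε) − φ(a)]. -/

import Mathlib

open MeasureTheory Filter
open scoped Topology ENNReal

/-- Let `μ` be a Borel probability measure on `ℝ` whose support is contained
in a bounded open interval `(a,b)`, let `φ : ℝ → ℝ` be a bounded, nondecreasing, continuously
differentiable function, and let `ε > 0`. Then
`∫ (φ(λ+ε) − φ(λ)) dμ(λ) ≤ s(μ,ε) · (φ(b+ε) − φ(a))`,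
where `s(μ,ε) = sup_{E} μ([E−ε,E+ε])` is the modulus of continuity of `μ`. -/
theorem ssf_partial_integration_bounded_interval
    (μ : Measure ℝ) [IsProbabilityMeasure μ] (a b : ℝ) (hab : a < b)
    (hsupp : μ (Set.Ioo a b)ᶜ = 0)
    (φ : ℝ → ℝ) (hmono : Monotone φ) (hbdd : ∃ M, ∀ x, |φ x| ≤ M)
    (hC1 : ContDiff ℝ 1 φ) (ε : ℝ) (hε : 0 < ε) :
    ∫ lam, (φ (lam + ε) - φ lam) ∂μ
      ≤ (⨆ E : ℝ, (μ (Set.Icc (E - ε) (E + ε))).toReal) * (φ (b + ε) - φ a) := by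
  classical
  set g : ℝ → ℝ := deriv φ with hg_def
  have hdiff : Differentiable ℝ φ := hC1.differentiable one_ne_zero
  have hφcont : Continuous φ := hC1.continuous
  have hg_cont : Continuous g := hC1.continuous_deriv le_rfl
  -- the derivative of a monotone function is nonnegative
  have hg_nonneg : ∀ t, 0 ≤ g t := by
    intro x
    have h1 : Tendsto (slope φ x) (𝓝[≠] x) (𝓝 (deriv φ x)) :=
      hasDerivAt_iff_tendsto_slope.mp (hdiff x).hasDerivAt
    refine ge_of_tendsto h1 ?_
    filter_upwards with y
    rw [slope_def_field]
    rcases le_total x y with h | h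
    · exact div_nonneg (sub_nonneg.2 (hmono h)) (sub_nonneg.2 h)
    · exact div_nonneg_of_nonpos (sub_nonpos.2 (hmono h)) (sub_nonpos.2 h)
  -- fundamental theorem of calculus
  have hFTC : ∀ u v : ℝ, ∫ t in u..v, g t = φ v - φ u := fun u v =>
    intervalIntegral.integral_deriv_eq_sub (fun x _ => hdiff x)
      (hg_cont.intervalIntegrable u v)
  -- the modulus of continuity
  set sR : ℝ := ⨆ E : ℝ, (μ (Set.Icc (E - ε) (E + ε))).toReal with hsR_def
  have hbd : ∀ E : ℝ, (μ (Set.Icc (E - ε) (E + ε))).toReal ≤ 1 := by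
    intro E
    have h1 : (μ (Set.Icc (E - ε) (E + ε))).toReal ≤ (μ Set.univ).toReal :=
      ENNReal.toReal_mono (measure_ne_top μ _) (measure_mono (Set.subset_univ _))
    simpa using h1
  have hS_le : ∀ t : ℝ, (μ (Set.Icc (t - ε) (t + ε))).toReal ≤ sR := fun t =>
    le_ciSup (f := fun E : ℝ => (μ (Set.Icc (E - ε) (E + ε))).toReal) ⟨1, by rintro x ⟨E, rfl⟩; exact hbd E⟩ t
  have hS_nonneg : 0 ≤ sR := le_trans ENNReal.toReal_nonneg (hS_le 0)
  set S : ℝ≥0∞ := ENNReal.ofReal sR with hS_def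
  have hμS : ∀ t : ℝ, μ (Set.Icc (t - ε) (t + ε)) ≤ S := by
    intro t
    rw [← ENNReal.ofReal_toReal (measure_ne_top μ (Set.Icc (t - ε) (t + ε)))]
    exact ENNReal.ofReal_le_ofReal (hS_le t)
  -- the measure restricted to the support interval
  set μ' : Measure ℝ := μ.restrict (Set.Ioo a b) with hμ'_def
  have hμeq : μ' = μ :=
    Measure.restrict_eq_self_of_ae_mem (by
      rw [MeasureTheory.ae_iff]
      exact hsupp)
  -- the two-variable kernel
  set K : ℝ → ℝ → ℝ≥0∞ := fun lam t =>
    Set.indicator (Set.Ioc lam (lam + ε)) (fun t => ENNReal.ofReal (g t)) t with hK_def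
  have hKmeas : Measurable (Function.uncurry K) := by
    have hset : MeasurableSet {p : ℝ × ℝ | p.1 < p.2 ∧ p.2 ≤ p.1 + ε} :=
      (measurableSet_lt measurable_fst measurable_snd).inter
        (measurableSet_le measurable_snd (measurable_fst.add_const ε))
    have heq : Function.uncurry K
        = Set.indicator {p : ℝ × ℝ | p.1 < p.2 ∧ p.2 ≤ p.1 + ε}
            (fun p => ENNReal.ofReal (g p.2)) := by
      ext p
      by_cases h : p.1 < p.2 ∧ p.2 ≤ p.1 + ε
      · simp [Function.uncurry, hK_def, Set.indicator, Set.mem_Ioc, h, h.1, h.2]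
      · simp [Function.uncurry, hK_def, Set.indicator, Set.mem_Ioc, h]
    rw [heq]
    exact Measurable.indicator
      (ENNReal.measurable_ofReal.comp (hg_cont.measurable.comp measurable_snd)) hset
  -- pointwise identity: the increment as an integral of the derivative
  have hpt : ∀ lam : ℝ, ENNReal.ofReal (φ (lam + ε) - φ lam) = ∫⁻ t, K lam t := by
    intro lam
    have hle : lam ≤ lam + ε := by linarith
    have h1 : φ (lam + ε) - φ lam = ∫ t in Set.Ioc lam (lam + ε), g t := by
      rw [← hFTC lam (lam + ε), intervalIntegral.integral_of_le hle]
    rw [h1, MeasureTheory.ofReal_integral_eq_lintegral_ofReal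
      (hg_cont.integrableOn_Ioc) (Eventually.of_forall fun t => hg_nonneg t)]
    rw [← MeasureTheory.lintegral_indicator measurableSet_Ioc]
  -- for fixed t, the kernel in the lam variable
  have hKt : ∀ t : ℝ, (fun lam => K lam t)
      = Set.indicator (Set.Ico (t - ε) t) (fun _ => ENNReal.ofReal (g t)) := by
    intro t
    ext lam
    by_cases h : lam ∈ Set.Ico (t - ε) t
    · rw [Set.indicator_of_mem h]
      have hmem : t ∈ Set.Ioc lam (lam + ε) := ⟨h.2, by linarith [h.1]⟩
      simp [hK_def, Set.indicator_of_mem hmem]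
    · rw [Set.indicator_of_notMem h]
      have hmem : t ∉ Set.Ioc lam (lam + ε) := by
        simp only [Set.mem_Ico, not_and_or, not_le, not_lt] at h
        rintro ⟨h1, h2⟩
        rcases h with h | h <;> linarith
      simp [hK_def, Set.indicator_of_notMem hmem]
  -- main computation with lintegrals
  have hnonnegF : ∀ lam : ℝ, 0 ≤ φ (lam + ε) - φ lam := fun lam =>
    sub_nonneg.2 (hmono (by linarith))
  have hkey : ∫⁻ lam, ENNReal.ofReal (φ (lam + ε) - φ lam) ∂μ
      ≤ ENNReal.ofReal (sR * (φ (b + ε) - φ a)) := by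
    calc ∫⁻ lam, ENNReal.ofReal (φ (lam + ε) - φ lam) ∂μ
        = ∫⁻ lam, ∫⁻ t, K lam t ∂volume ∂μ' := by
          rw [hμeq]
          exact lintegral_congr fun lam => hpt lam
      _ = ∫⁻ t, ∫⁻ lam, K lam t ∂μ' ∂volume := lintegral_lintegral_swap hKmeas.aemeasurable
      _ = ∫⁻ t, ENNReal.ofReal (g t) * μ' (Set.Ico (t - ε) t) ∂volume := by
          refine lintegral_congr fun t => ?_
          rw [hKt t, MeasureTheory.lintegral_indicator measurableSet_Ico,
            MeasureTheory.setLIntegral_const]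
      _ ≤ ∫⁻ t, Set.indicator (Set.Ioc a (b + ε)) (fun t => S * ENNReal.ofReal (g t)) t := by
          refine lintegral_mono fun t => ?_
          by_cases ht : t ∈ Set.Ioc a (b + ε)
          · rw [Set.indicator_of_mem ht, mul_comm]
            refine mul_le_mul' ?_ le_rfl
            have h1 : μ' (Set.Ico (t - ε) t) ≤ μ (Set.Ico (t - ε) t) :=
              Measure.restrict_le_self _
            refine le_trans h1 (le_trans (measure_mono ?_) (hμS t))
            exact (Set.Ico_subset_Icc_self).trans (Set.Icc_subset_Icc_right (by linarith))
          · rw [Set.indicator_of_notMem ht]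
            have hempty : Set.Ico (t - ε) t ∩ Set.Ioo a b = ∅ := by
              ext x
              simp only [Set.mem_inter_iff, Set.mem_Ico, Set.mem_Ioo,
                Set.mem_empty_iff_false, iff_false]
              simp only [Set.mem_Ioc, not_and_or, not_le, not_lt] at ht
              rintro ⟨⟨h1, h2⟩, h3, h4⟩
              rcases ht with h | h <;> linarith
            rw [hμ'_def, Measure.restrict_apply measurableSet_Ico, hempty]
            simp
      _ = S * ∫⁻ t in Set.Ioc a (b + ε), ENNReal.ofReal (g t) := by
          rw [MeasureTheory.lintegral_indicator measurableSet_Ioc,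
            MeasureTheory.lintegral_const_mul _ hg_cont.measurable.ennreal_ofReal]
      _ = ENNReal.ofReal (sR * (φ (b + ε) - φ a)) := by
          have h1 : ∫ t in Set.Ioc a (b + ε), g t = φ (b + ε) - φ a := by
            rw [← intervalIntegral.integral_of_le (by linarith : a ≤ b + ε), hFTC]
          rw [← MeasureTheory.ofReal_integral_eq_lintegral_ofReal
            (hg_cont.integrableOn_Ioc) (Eventually.of_forall fun t => hg_nonneg t),
            h1, hS_def, ← ENNReal.ofReal_mul hS_nonneg]
  -- conclude
  have hmeasF : AEStronglyMeasurable (fun lam => φ (lam + ε) - φ lam) μ :=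
    ((hφcont.comp (continuous_id.add continuous_const)).sub hφcont).aestronglyMeasurable
  rw [MeasureTheory.integral_eq_lintegral_of_nonneg_ae
    (Eventually.of_forall hnonnegF) hmeasF]
  exact ENNReal.toReal_le_of_le_ofReal
    (mul_nonneg hS_nonneg (sub_nonneg.2 (hmono (by linarith)))) hkey
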